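/- Let (ξ_n)_{n≥0} be a Markov chain satisfying the uniform geometric ergodicity condition sup_x |∫P(n,x,dy)f(y) − ∫f dν| ≤ R e^{−ρn} sup|f|. Then for every starting point x, the chain is φ-mixing with φ_x(n) ≤ 2R e^{−ρn}, where φ_x(n) = sup_{m≥0} sup { |P_x(Γ∩Δ)/P_x(Γ) − P_x(Δ)| : Γ ∈ F_{0,m}, Δ ∈ F_{m+n,∞}, P_x(Γ) > 0 }. -/

import Mathlib

open Matrix MeasureTheory Filter

noncomputable def opNorm {n : Type*} [Fintype n] [DecidableEq n] (A : Matrix n n ℝ) : ℝ :=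
  ‖Matrix.toEuclideanCLM (𝕜 := ℝ) A‖

noncomputable def topSingVal {n : Type*} [Fintype n] [DecidableEq n] (A : Matrix n n ℝ) : ℝ :=
  ⨆ i, Real.sqrt ((Matrix.isHermitian_conjTranspose_mul_self A).eigenvalues i)

noncomputable def singVals {d : ℕ} (A : Matrix (Fin d) (Fin d) ℝ) : Fin d → ℝ := fun i =>
  let f : Fin d → ℝ := fun j =>
    Real.sqrt ((Matrix.isHermitian_conjTranspose_mul_self A).eigenvalues j)
  (f ∘ Tuple.sort f) i.rev

noncomputable def compound {d : ℕ} (k : ℕ) (A : Matrix (Fin d) (Fin d) ℝ) :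
    Matrix {s : Finset (Fin d) // s.card = k} {s : Finset (Fin d) // s.card = k} ℝ :=
  Matrix.of fun S T =>
    (A.submatrix (fun i => (S.1.orderIsoOfFin S.2 i : Fin d))
      (fun j => (T.1.orderIsoOfFin T.2 j : Fin d))).det

noncomputable def prodDesc {d : ℕ} (X : ℕ → Matrix (Fin d) (Fin d) ℝ) (a b : ℕ) :
    Matrix (Fin d) (Fin d) ℝ :=
  (((List.range' a (b + 1 - a)).map X).reverse).prod

instance matrixMeasurableSpace {m n : Type*} : MeasurableSpace (Matrix m n ℝ) :=
  inferInstanceAs (MeasurableSpace (m → n → ℝ))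

open ProbabilityTheory

noncomputable def iterKernel {E : Type*} [MeasurableSpace E]
    (P : Kernel E E) : ℕ → Kernel E E
  | 0 => Kernel.id
  | n + 1 => P ∘ₖ iterKernel P n

/-- The σ-algebra on path space generated by the coordinates with indices in [m, n]. -/
def pathSeg (E : Type*) [MeasurableSpace E] (m n : ℕ) : MeasurableSpace (ℕ → E) :=
  ⨆ k ∈ Set.Icc m n, MeasurableSpace.comap (fun ω : ℕ → E => ω k) inferInstance

/-- The σ-algebra on path space generated by the coordinates with indices in [m, ∞). -/
def pathTail (E : Type*) [MeasurableSpace E] (m : ℕ) : MeasurableSpace (ℕ → E) :=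
  ⨆ k ∈ Set.Ici m, MeasurableSpace.comap (fun ω : ℕ → E => ω k) inferInstance

open scoped ENNReal

section PM
variable {E : Type*} [MeasurableSpace E]
instance iterKernel_isMarkov (P : Kernel E E) [IsMarkovKernel P] (n : ℕ) :
    IsMarkovKernel (iterKernel P n) := by
  induction n with
  | zero => rw [iterKernel]; infer_instance
  | succ n ih => rw [iterKernel]; infer_instance
lemma pathSeg_le (a b : ℕ) : pathSeg E a b ≤ (inferInstance : MeasurableSpace (ℕ → E)) :=
  iSup₂_le fun k _ => (measurable_pi_apply k).comap_le
lemma pathTail_le (a : ℕ) : pathTail E a ≤ (inferInstance : MeasurableSpace (ℕ → E)) :=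
  iSup₂_le fun k _ => (measurable_pi_apply k).comap_le
lemma pathSeg_mono {a b b' : ℕ} (h : b ≤ b') : pathSeg E a b ≤ pathSeg E a b' :=
  iSup₂_le fun k hk => le_iSup₂ (f := fun k (_ : k ∈ Set.Icc a b') =>
    MeasurableSpace.comap (fun ω : ℕ → E => ω k) inferInstance) k ⟨hk.1, hk.2.trans h⟩
lemma coord_mem_pathSeg {a b k : ℕ} (h1 : a ≤ k) (h2 : k ≤ b) {A : Set E}
    (hA : MeasurableSet A) : MeasurableSet[pathSeg E a b] {ω : ℕ → E | ω k ∈ A} :=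
  le_iSup₂ (f := fun k (_ : k ∈ Set.Icc a b) =>
    MeasurableSpace.comap (fun ω : ℕ → E => ω k) inferInstance) k ⟨h1, h2⟩ _ ⟨A, hA, rfl⟩

variable {μ : Measure (ℕ → E)} [IsProbabilityMeasure μ] {P : Kernel E E} [IsMarkovKernel P]

lemma step1
    (hmark : ∀ n : ℕ, ∀ B : Set (ℕ → E), MeasurableSet[pathSeg E 0 n] B →
      ∀ A : Set E, MeasurableSet A →
        μ (B ∩ {ω | ω (n + 1) ∈ A}) = ∫⁻ ω in B, P (ω n) A ∂μ)
    (n : ℕ) (B : Set (ℕ → E)) (hB : MeasurableSet[pathSeg E 0 n] B)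
    (f : E → ℝ≥0∞) (hf : Measurable f) :
    ∫⁻ ω in B, f (ω (n + 1)) ∂μ = ∫⁻ ω in B, ∫⁻ y, f y ∂(P (ω n)) ∂μ := by
  have hBm : MeasurableSet B := pathSeg_le 0 n B hB
  refine Measurable.ennreal_induction
    (motive := fun f => ∫⁻ ω in B, f (ω (n + 1)) ∂μ = ∫⁻ ω in B, ∫⁻ y, f y ∂(P (ω n)) ∂μ)
    ?_ ?_ ?_ hf
  · intro c s hs
    have hpre : ∀ k : ℕ, (fun ω : ℕ → E => s.indicator (fun _ => c) (ω k)) =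
        ({ω : ℕ → E | ω k ∈ s}.indicator fun _ => c) := by
      intro k; ext ω; by_cases h : ω k ∈ s <;>
        simp [Set.indicator, h, Set.mem_setOf_eq]
    have hsp : ∀ k : ℕ, MeasurableSet {ω : ℕ → E | ω k ∈ s} :=
      fun k => (measurable_pi_apply k) hs
    rw [hpre (n+1)]
    rw [lintegral_indicator (hsp (n+1)), Measure.restrict_restrict (hsp (n+1)),
      lintegral_const, Measure.restrict_apply MeasurableSet.univ, Set.univ_inter,
      Set.inter_comm, hmark n B hB s hs]
    have : ∀ ω : ℕ → E, (∫⁻ y, s.indicator (fun _ => c) y ∂(P (ω n))) = c * P (ω n) s := by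
      intro ω; rw [lintegral_indicator hs, lintegral_const,
        Measure.restrict_apply MeasurableSet.univ, Set.univ_inter]
    simp_rw [this]
    rw [lintegral_const_mul]
    exact (Kernel.measurable_coe P hs).comp (measurable_pi_apply n)
  · intro f g hdisj hfm hgm ihf ihg
    have h1 : ∀ k, Measurable fun ω : ℕ → E => f (ω k) :=
      fun k => hfm.comp (measurable_pi_apply k)
    simp only [Pi.add_apply]
    rw [lintegral_add_left (h1 (n+1)), ihf, ihg]
    have : ∀ ω : ℕ → E, (∫⁻ y, f y + g y ∂(P (ω n))) =
        (∫⁻ y, f y ∂(P (ω n))) + ∫⁻ y, g y ∂(P (ω n)) := fun ω => lintegral_add_left hfm _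
    simp_rw [this]
    rw [lintegral_add_left]
    exact ((hfm.comp measurable_snd).lintegral_kernel_prod_right').comp (measurable_pi_apply n)
  · intro f hfm hmono ihf
    show ∫⁻ ω in B, ⨆ i, f i (ω (n + 1)) ∂μ =
      ∫⁻ ω in B, ∫⁻ y, ⨆ i, f i y ∂(P (ω n)) ∂μ
    have h1 : ∀ k, Monotone fun (i : ℕ) (ω : ℕ → E) => f i (ω k) :=
      fun k i j hij ω => hmono hij _
    have hmeas : ∀ i : ℕ, Measurable fun ω : ℕ → E => f i (ω (n+1)) :=
      fun i => (hfm i).comp (measurable_pi_apply _)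
    rw [lintegral_iSup (f := fun i (ω : ℕ → E) => f i (ω (n+1))) hmeas (h1 (n+1))]
    simp_rw [ihf]
    have : ∀ ω : ℕ → E, (∫⁻ y, ⨆ i, f i y ∂(P (ω n))) =
        ⨆ i, ∫⁻ y, f i y ∂(P (ω n)) := fun ω => lintegral_iSup hfm hmono
    simp_rw [this]
    rw [lintegral_iSup (f := fun i (ω : ℕ → E) => ∫⁻ y, f i y ∂(P (ω n)))]
    · exact fun i => (Measurable.lintegral_kernel_prod_right' (κ := P)
        (f := fun p : E × E => f i p.2) ((hfm i).comp measurable_snd)).comp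
        (measurable_pi_apply n)
    · exact fun i j hij ω => lintegral_mono fun y => hmono hij y

lemma stepk
    (hmark : ∀ n : ℕ, ∀ B : Set (ℕ → E), MeasurableSet[pathSeg E 0 n] B →
      ∀ A : Set E, MeasurableSet A →
        μ (B ∩ {ω | ω (n + 1) ∈ A}) = ∫⁻ ω in B, P (ω n) A ∂μ) :
    ∀ (k s : ℕ) (B : Set (ℕ → E)), MeasurableSet[pathSeg E 0 s] B →
    ∀ f : E → ℝ≥0∞, Measurable f →
    ∫⁻ ω in B, f (ω (s + k)) ∂μ = ∫⁻ ω in B, ∫⁻ y, f y ∂(iterKernel P k (ω s)) ∂μ := by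
  intro k
  induction k with
  | zero =>
    intro s B hB f hf
    simp only [Nat.add_zero, iterKernel, Kernel.id_apply]
    congr 1
    ext ω
    rw [lintegral_dirac' _ hf]
  | succ k ih =>
    intro s B hB f hf
    have hB' : MeasurableSet[pathSeg E 0 (s + k)] B :=
      pathSeg_mono (Nat.le_add_right s k) B hB
    have hg : Measurable fun z : E => ∫⁻ y, f y ∂(P z) :=
      Measurable.lintegral_kernel_prod_right' (κ := P) (f := fun p : E × E => f p.2)
        (hf.comp measurable_snd)
    have e1 : ∫⁻ ω in B, f (ω (s + k + 1)) ∂μ =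
        ∫⁻ ω in B, (fun z => ∫⁻ y, f y ∂(P z)) (ω (s + k)) ∂μ :=
      step1 (μ := μ) (P := P) hmark (s + k) B hB' f hf
    have e0 : ∫⁻ ω in B, f (ω (s + (k+1))) ∂μ = ∫⁻ ω in B, f (ω (s + k + 1)) ∂μ := rfl
    rw [e0, e1, ih s B hB _ hg]
    congr 1
    ext ω
    rw [show iterKernel P (k+1) = P ∘ₖ iterKernel P k from rfl,
      Kernel.lintegral_comp _ _ _ hf]

noncomputable def condFun (P : Kernel E E) : ℕ → (ℕ → Set E) → E → ℝ≥0∞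
  | 0, _ => fun _ => 1
  | (j+1), A => fun y => ∫⁻ z, (A 0).indicator (condFun P j (fun i => A (i+1))) z ∂(P y)

lemma condFun_measurable (P : Kernel E E) [IsMarkovKernel P] :
    ∀ (j : ℕ) (A : ℕ → Set E), (∀ i, MeasurableSet (A i)) →
    Measurable (condFun P j A) := by
  intro j
  induction j with
  | zero => intro A hA; simpa [condFun] using measurable_const
  | succ j ih =>
    intro A hA
    have h1 : Measurable ((A 0).indicator (condFun P j (fun i => A (i+1)))) :=
      (ih _ fun i => hA (i+1)).indicator (hA 0)
    exact Measurable.lintegral_kernel_prod_right' (κ := P)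
      (f := fun p : E × E => (A 0).indicator (condFun P j (fun i => A (i+1))) p.2)
      (h1.comp measurable_snd)

lemma condFun_le_one (P : Kernel E E) [IsMarkovKernel P] :
    ∀ (j : ℕ) (A : ℕ → Set E) (y : E), condFun P j A y ≤ 1 := by
  intro j
  induction j with
  | zero => intro A y; simp [condFun]
  | succ j ih =>
    intro A y
    show (∫⁻ z, (A 0).indicator (condFun P j (fun i => A (i+1))) z ∂(P y)) ≤ 1
    calc ∫⁻ z, (A 0).indicator (condFun P j (fun i => A (i+1))) z ∂(P y)
        ≤ ∫⁻ _, 1 ∂(P y) := lintegral_mono fun z =>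
          (Set.indicator_le_self _ _ z).trans (ih _ z)
      _ = 1 := by simp

lemma setLIntegral_indicator_coord {μ : Measure (ℕ → E)} (B : Set (ℕ → E))
    (hB : MeasurableSet B) (t : ℕ) {A : Set E} (hA : MeasurableSet A)
    (F : E → ℝ≥0∞) :
    ∫⁻ ω in B ∩ {ω : ℕ → E | ω t ∈ A}, F (ω t) ∂μ
      = ∫⁻ ω in B, (A.indicator F) (ω t) ∂μ := by
  have hpre : MeasurableSet {ω : ℕ → E | ω t ∈ A} := measurable_pi_apply t hA
  have e : ∀ ω : ℕ → E, (A.indicator F) (ω t)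
      = Set.indicator {ω : ℕ → E | ω t ∈ A} (fun ω => F (ω t)) ω := by
    intro ω; by_cases h : ω t ∈ A <;> simp [Set.indicator, h, Set.mem_setOf_eq]
  simp_rw [e]
  rw [lintegral_indicator hpre, Measure.restrict_restrict hpre, Set.inter_comm]

lemma rect_lemma {μ : Measure (ℕ → E)} [IsProbabilityMeasure μ]
    {P : Kernel E E} [IsMarkovKernel P]
    (hmark : ∀ n : ℕ, ∀ B : Set (ℕ → E), MeasurableSet[pathSeg E 0 n] B →
      ∀ A : Set E, MeasurableSet A →
        μ (B ∩ {ω | ω (n + 1) ∈ A}) = ∫⁻ ω in B, P (ω n) A ∂μ) :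
    ∀ (j : ℕ) (A : ℕ → Set E), (∀ i, MeasurableSet (A i)) →
    ∀ (s : ℕ) (B : Set (ℕ → E)), MeasurableSet[pathSeg E 0 s] B →
    μ (B ∩ {ω | ∀ i, i < j → ω (s + 1 + i) ∈ A i})
      = ∫⁻ ω in B, condFun P j A (ω s) ∂μ := by
  intro j
  induction j with
  | zero =>
    intro A hA s B hB
    have : {ω : ℕ → E | ∀ i, i < 0 → ω (s + 1 + i) ∈ A i} = Set.univ := by
      ext ω; simp
    rw [this, Set.inter_univ]
    show μ B = ∫⁻ _ in B, 1 ∂μ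
    rw [setLIntegral_one]
  | succ j ih =>
    intro A hA s B hB
    have hsplit : {ω : ℕ → E | ∀ i, i < j + 1 → ω (s + 1 + i) ∈ A i}
        = {ω : ℕ → E | ω (s + 1) ∈ A 0} ∩
          {ω : ℕ → E | ∀ i, i < j → ω (s + 1 + 1 + i) ∈ A (i + 1)} := by
      ext ω
      simp only [Set.mem_setOf_eq, Set.mem_inter_iff]
      constructor
      · intro h
        refine ⟨by simpa using h 0 (Nat.succ_pos j), fun i hi => ?_⟩
        have h2 := h (i+1) (Nat.succ_lt_succ hi)
        rwa [show s + 1 + (i + 1) = s + 1 + 1 + i by omega] at h2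
      · rintro ⟨h0, h1⟩ i hi
        match i with
        | 0 => simpa using h0
        | (i+1) =>
          have h2 := h1 i (Nat.lt_of_succ_lt_succ hi)
          rwa [show s + 1 + 1 + i = s + 1 + (i + 1) by omega] at h2
    have hB' : MeasurableSet[pathSeg E 0 (s+1)] (B ∩ {ω : ℕ → E | ω (s+1) ∈ A 0}) :=
      (pathSeg_mono (Nat.le_succ s) B hB).inter
        (coord_mem_pathSeg (Nat.zero_le _) (le_refl (s+1)) (hA 0))
    have e1 := ih (fun i => A (i+1)) (fun i => hA (i+1)) (s+1)
      (B ∩ {ω : ℕ → E | ω (s+1) ∈ A 0}) hB'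
    rw [hsplit, ← Set.inter_assoc, e1]
    have hcm : Measurable (condFun P j (fun i => A (i+1))) :=
      condFun_measurable P j _ fun i => hA (i+1)
    rw [setLIntegral_indicator_coord B (pathSeg_le 0 s B hB) (s+1) (hA 0)
      (condFun P j (fun i => A (i+1)))]
    exact step1 hmark s B hB _ (hcm.indicator (hA 0))

lemma exists_condFun {μ : Measure (ℕ → E)} [IsProbabilityMeasure μ]
    {P : Kernel E E} [IsMarkovKernel P]
    (hmark : ∀ n : ℕ, ∀ B : Set (ℕ → E), MeasurableSet[pathSeg E 0 n] B →
      ∀ A : Set E, MeasurableSet A →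
        μ (B ∩ {ω | ω (n + 1) ∈ A}) = ∫⁻ ω in B, P (ω n) A ∂μ)
    (m' : ℕ) :
    ∀ Δ : Set (ℕ → E), MeasurableSet[pathTail E m'] Δ →
    ∃ h : E → ℝ≥0∞, Measurable h ∧ (∀ y, h y ≤ 1) ∧
      ∀ B : Set (ℕ → E), MeasurableSet[pathSeg E 0 m'] B →
        μ (B ∩ Δ) = ∫⁻ ω in B, h (ω m') ∂μ := by
  classical
  have h_eq : pathTail E m' = MeasurableSpace.generateFrom
      (piiUnionInter (fun k : ℕ => {s : Set (ℕ → E) |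
        MeasurableSet[MeasurableSpace.comap (fun ω : ℕ → E => ω k) inferInstance] s})
        (Set.Ici m')) :=
    (generateFrom_piiUnionInter_measurableSet _ _).symm
  have h_pi : IsPiSystem (piiUnionInter (fun k : ℕ => {s : Set (ℕ → E) |
      MeasurableSet[MeasurableSpace.comap (fun ω : ℕ → E => ω k) inferInstance] s})
      (Set.Ici m')) :=
    isPiSystem_piiUnionInter _
      (fun k => @MeasurableSpace.isPiSystem_measurableSet _
        (MeasurableSpace.comap (fun ω : ℕ → E => ω k) inferInstance)) _
  intro Δ hΔ
  refine MeasurableSpace.induction_on_inter (m := pathTail E m')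
    (C := fun Δ _ => ∃ h : E → ℝ≥0∞, Measurable h ∧ (∀ y, h y ≤ 1) ∧
      ∀ B : Set (ℕ → E), MeasurableSet[pathSeg E 0 m'] B →
        μ (B ∩ Δ) = ∫⁻ ω in B, h (ω m') ∂μ) h_eq h_pi ?_ ?_ ?_ ?_ Δ hΔ
  · -- empty
    exact ⟨fun _ => 0, measurable_const, fun y => zero_le_one, fun B hB => by simp⟩
  · -- basic
    rintro u ⟨t, ht, f, hf, rfl⟩
    set C : ℕ → Set E := fun i => if h : i ∈ t then
      (MeasurableSpace.measurableSet_comap.mp (hf i h)).choose else Set.univ with hC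
    have hCmeas : ∀ i, MeasurableSet (C i) := by
      intro i
      by_cases h : i ∈ t
      · simp only [hC, dif_pos h]
        exact (MeasurableSpace.measurableSet_comap.mp (hf i h)).choose_spec.1
      · simp [hC, dif_neg h]
    have hCpre : ∀ i ∈ t, (fun ω : ℕ → E => ω i) ⁻¹' C i = f i := by
      intro i h
      simp only [hC, dif_pos h]
      exact (MeasurableSpace.measurableSet_comap.mp (hf i h)).choose_spec.2
    set j : ℕ := t.sup id + 1 with hj
    set A : ℕ → Set E := fun i => C (m' + 1 + i) with hA
    have hΔeq : (⋂ x ∈ t, f x) =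
        {ω : ℕ → E | ω m' ∈ C m'} ∩ {ω | ∀ i, i < j → ω (m' + 1 + i) ∈ A i} := by
      ext ω
      simp only [Set.mem_iInter, Set.mem_inter_iff, Set.mem_setOf_eq]
      constructor
      · intro h
        constructor
        · by_cases hm : m' ∈ t
          · have := h m' hm
            rw [← hCpre m' hm] at this
            exact this
          · simp [hC, dif_neg hm]
        · intro i hi
          by_cases hk : m' + 1 + i ∈ t
          · have := h _ hk
            rw [← hCpre _ hk] at this
            exact this
          · simp [hA, hC, dif_neg hk]
      · rintro ⟨h0, h1⟩ i hi
        rw [← hCpre i hi]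
        have him : m' ≤ i := ht hi
        rcases Nat.eq_or_lt_of_le him with heq2 | hlt
        · simpa [← heq2] using h0
        · have hle : i ≤ t.sup id := Finset.le_sup (f := id) hi
          have h2 := h1 (i - (m' + 1)) (by omega)
          show ω i ∈ C i
          have heq3 : m' + 1 + (i - (m' + 1)) = i := by omega
          have h3 : ω (m' + 1 + (i - (m' + 1))) ∈ C (m' + 1 + (i - (m' + 1))) := h2
          rwa [heq3] at h3
    refine ⟨(C m').indicator (condFun P j A), (condFun_measurable P j A
      (fun i => hCmeas _)).indicator (hCmeas m'), ?_, ?_⟩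
    · intro y
      exact (Set.indicator_le_self _ _ y).trans (condFun_le_one P j A y)
    · intro B hB
      have hB' : MeasurableSet[pathSeg E 0 m'] (B ∩ {ω : ℕ → E | ω m' ∈ C m'}) :=
        hB.inter (coord_mem_pathSeg (Nat.zero_le _) (le_refl m') (hCmeas m'))
      rw [hΔeq, ← Set.inter_assoc,
        rect_lemma hmark j A (fun i => hCmeas _) m' _ hB',
        setLIntegral_indicator_coord B (pathSeg_le 0 m' B hB) m' (hCmeas m')
          (condFun P j A)]
  · -- compl
    rintro Δ' hΔ' ⟨h, hm, hb, heq⟩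
    refine ⟨fun y => 1 - h y, measurable_const.sub hm, fun y => tsub_le_self, ?_⟩
    intro B hB
    have hBm : MeasurableSet B := pathSeg_le 0 m' B hB
    have hΔm : MeasurableSet Δ' := pathTail_le m' Δ' hΔ'
    have key : μ (B ∩ Δ') + μ (B ∩ Δ'ᶜ) = μ B := by
      rw [show B ∩ Δ'ᶜ = B \ Δ' from (Set.diff_eq B Δ').symm]
      exact measure_inter_add_diff B hΔm
    have key2 : μ (B ∩ Δ') + ∫⁻ ω in B, (1 - h (ω m')) ∂μ = μ B := by
      have hcomp : Measurable fun ω : ℕ → E => h (ω m') := hm.comp (measurable_pi_apply _)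
      rw [heq B hB, ← lintegral_add_left hcomp]
      have : ∀ ω : ℕ → E, h (ω m') + (1 - h (ω m')) = 1 :=
        fun ω => add_tsub_cancel_of_le (hb (ω m'))
      simp_rw [this]
      exact setLIntegral_one B
    have := key.trans key2.symm
    exact (ENNReal.add_right_inj (measure_ne_top μ _)).mp this
  · -- iUnion
    rintro f hdisj hfmeas hC
    choose h hm hb heq using hC
    set hsum : E → ℝ≥0∞ := fun y => ∑' i, h i y with hhsum
    have hsm : Measurable hsum := Measurable.ennreal_tsum hm
    have hsumEq : ∀ B : Set (ℕ → E), MeasurableSet[pathSeg E 0 m'] B →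
        μ (B ∩ ⋃ i, f i) = ∫⁻ ω in B, hsum (ω m') ∂μ := by
      intro B hB
      rw [Set.inter_iUnion, measure_iUnion
        (fun i k hik => ((hdisj hik).mono Set.inter_subset_right Set.inter_subset_right))
        (fun i => (pathSeg_le 0 m' B hB).inter (pathTail_le m' _ (hfmeas i)))]
      have : ∀ i, μ (B ∩ f i) = ∫⁻ ω in B, h i (ω m') ∂μ := fun i => heq i B hB
      simp_rw [this]
      have hcomp : ∀ i : ℕ, Measurable fun ω : ℕ → E => h i (ω m') :=
        fun i => (hm i).comp (measurable_pi_apply _)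
      rw [← lintegral_tsum (f := fun i (ω : ℕ → E) => h i (ω m'))
        (fun i => (hcomp i).aemeasurable)]
    have hBk0 : ∀ k : ℕ, μ {ω : ℕ → E | ω m' ∈ {y | 1 + (k:ℝ≥0∞)⁻¹ ≤ hsum y}} = 0 := by
      intro k
      set N : Set E := {y | 1 + (k:ℝ≥0∞)⁻¹ ≤ hsum y} with hN
      have hNm : MeasurableSet N := hsm measurableSet_Ici
      set Bk : Set (ℕ → E) := {ω : ℕ → E | ω m' ∈ N} with hBk
      have hBkseg : MeasurableSet[pathSeg E 0 m'] Bk :=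
        coord_mem_pathSeg (Nat.zero_le _) (le_refl m') hNm
      have hBkm : MeasurableSet Bk := pathSeg_le 0 m' Bk hBkseg
      have hle : ∫⁻ ω in Bk, hsum (ω m') ∂μ ≤ μ Bk := by
        rw [← hsumEq Bk hBkseg]
        exact measure_mono Set.inter_subset_left
      have hge : (1 + (k:ℝ≥0∞)⁻¹) * μ Bk ≤ ∫⁻ ω in Bk, hsum (ω m') ∂μ := by
        rw [← setLIntegral_const Bk (1 + (k:ℝ≥0∞)⁻¹)]
        exact setLIntegral_mono (hsm.comp (measurable_pi_apply m')) (fun ω hω => hω)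
      by_contra hne
      have hfin : μ Bk ≠ ⊤ := measure_ne_top μ _
      have h1 : (1 + (k:ℝ≥0∞)⁻¹) * μ Bk ≤ 1 * μ Bk := by
        rw [one_mul]; exact hge.trans hle
      have h2 : (1 + (k:ℝ≥0∞)⁻¹) ≤ 1 :=
        (ENNReal.mul_le_mul_iff_left hne hfin).mp h1
      have h3 : (k:ℝ≥0∞)⁻¹ ≤ 0 := by
        have h2' : (1:ℝ≥0∞) + (k:ℝ≥0∞)⁻¹ ≤ 1 + 0 := by simpa using h2
        exact (ENNReal.add_le_add_iff_left (by simp)).mp h2'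
      have h4 : (k:ℝ≥0∞)⁻¹ = 0 := le_antisymm h3 zero_le
      rw [ENNReal.inv_eq_zero] at h4
      exact (ENNReal.natCast_ne_top k) h4
    have hNull : μ {ω : ℕ → E | 1 < hsum (ω m')} = 0 := by
      have hsub : {ω : ℕ → E | 1 < hsum (ω m')} ⊆
          ⋃ k : ℕ, {ω : ℕ → E | ω m' ∈ {y | 1 + (k:ℝ≥0∞)⁻¹ ≤ hsum y}} := by
        intro ω hω
        simp only [Set.mem_setOf_eq] at hω
        simp only [Set.mem_iUnion, Set.mem_setOf_eq]
        by_cases htop : hsum (ω m') = ⊤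
        · exact ⟨1, by rw [htop]; exact le_top⟩
        · have hpos : hsum (ω m') - 1 ≠ 0 := (tsub_pos_iff_lt.mpr hω).ne'
          obtain ⟨n, hn⟩ := ENNReal.exists_inv_nat_lt hpos
          refine ⟨n, ?_⟩
          have : (1:ℝ≥0∞) + (n:ℝ≥0∞)⁻¹ < 1 + (hsum (ω m') - 1) :=
            ENNReal.add_lt_add_left (by simp) hn
          rw [add_tsub_cancel_of_le hω.le] at this
          exact this.le
      exact measure_mono_null hsub (measure_iUnion_null hBk0)
    refine ⟨fun y => min (hsum y) 1, hsm.min measurable_const, fun y => min_le_right _ _, ?_⟩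
    intro B hB
    rw [hsumEq B hB]
    have hae : ∀ᵐ ω ∂μ, hsum (ω m') = min (hsum (ω m')) 1 := by
      rw [ae_iff]
      refine measure_mono_null ?_ hNull
      intro ω hω
      simp only [Set.mem_setOf_eq] at hω ⊢
      by_contra hcon
      push_neg at hcon
      exact hω (min_eq_left hcon).symm
    exact lintegral_congr_ae (ae_restrict_of_ae hae)

end PM

set_option maxHeartbeats 1000000 in
theorem phi_mixing_of_uniform_ergodicity
    {E : Type*} [MeasurableSpace E] [TopologicalSpace E] [PolishSpace E]
    [BorelSpace E]
    (P : Kernel E E) [IsMarkovKernel P]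
    (ν : Measure E) [IsProbabilityMeasure ν] (R ρ : ℝ) (hR : 0 < R) (hρ : 0 < ρ)
    (herg : ∀ f : E → ℝ, Measurable f → ∀ M : ℝ, (∀ y, |f y| ≤ M) →
      ∀ n : ℕ, 1 ≤ n → ∀ x : E,
        |(∫ y, f y ∂(iterKernel P n x)) - ∫ y, f y ∂ν| ≤
          R * Real.exp (-ρ * n) * M)
    (Px : E → Measure (ℕ → E)) (hPx : ∀ x, IsProbabilityMeasure (Px x))
    (hinit : ∀ x, (Px x).map (fun ω => ω 0) = Measure.dirac x)
    (hmarkov : ∀ x : E, ∀ n : ℕ, ∀ B : Set (ℕ → E),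
      MeasurableSet[pathSeg E 0 n] B → ∀ A : Set E, MeasurableSet A →
        Px x (B ∩ {ω | ω (n + 1) ∈ A}) = ∫⁻ ω in B, P (ω n) A ∂(Px x)) :
    ∀ x : E, ∀ m n : ℕ, 1 ≤ n →
      ∀ Γ : Set (ℕ → E), MeasurableSet[pathSeg E 0 m] Γ →
      ∀ Δ : Set (ℕ → E), MeasurableSet[pathTail E (m + n)] Δ →
      Px x Γ ≠ 0 →
        |(Px x (Γ ∩ Δ)).toReal / (Px x Γ).toReal - (Px x Δ).toReal| ≤
          2 * R * Real.exp (-ρ * n) := by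
  intro x m n hn Γ hΓ Δ hΔ hΓ0
  haveI := hPx x
  set μ : Measure (ℕ → E) := Px x with hμ
  have hmark : ∀ k : ℕ, ∀ B : Set (ℕ → E), MeasurableSet[pathSeg E 0 k] B →
      ∀ A : Set E, MeasurableSet A →
        μ (B ∩ {ω | ω (k + 1) ∈ A}) = ∫⁻ ω in B, P (ω k) A ∂μ :=
    fun k B hB A hA => hmarkov x k B hB A hA
  obtain ⟨h, hhm, hh1, hkey⟩ := exists_condFun hmark (m + n) Δ hΔ
  set G : E → ℝ≥0∞ := fun z => ∫⁻ y, h y ∂(iterKernel P n z) with hG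
  have hΓseg : MeasurableSet[pathSeg E 0 (m + n)] Γ :=
    pathSeg_mono (Nat.le_add_right m n) Γ hΓ
  have e1 : μ (Γ ∩ Δ) = ∫⁻ ω in Γ, G (ω m) ∂μ := by
    rw [hkey Γ hΓseg]
    exact stepk hmark n m Γ hΓ h hhm
  have e2 : μ Δ = ∫⁻ ω in Set.univ, G (ω m) ∂μ := by
    have h1 := hkey Set.univ MeasurableSet.univ
    rw [Set.univ_inter] at h1
    rw [h1]
    exact stepk hmark n m Set.univ MeasurableSet.univ h hhm
  set c : ℝ := ∫ y, (h y).toReal ∂ν with hc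
  set ε : ℝ := R * Real.exp (-ρ * n) with hε
  have hεpos : 0 < ε := mul_pos hR (Real.exp_pos _)
  have hcnn : 0 ≤ c := integral_nonneg fun y => ENNReal.toReal_nonneg
  have hftoReal : ∀ y, |(h y).toReal| ≤ 1 := by
    intro y
    rw [abs_of_nonneg ENNReal.toReal_nonneg]
    simpa using ENNReal.toReal_mono ENNReal.one_ne_top (hh1 y)
  have hGle : ∀ z, G z ≤ 1 := by
    intro z
    calc G z ≤ ∫⁻ _, 1 ∂(iterKernel P n z) := lintegral_mono hh1
      _ = 1 := by simp
  have hGfin : ∀ z, G z ≠ ⊤ := fun z => ((hGle z).trans_lt (by simp)).ne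
  have hGtoReal : ∀ z, (G z).toReal = ∫ y, (h y).toReal ∂(iterKernel P n z) := by
    intro z
    rw [integral_toReal hhm.aemeasurable
      (Filter.Eventually.of_forall fun y => (hh1 y).trans_lt (by simp))]
  have hGc : ∀ z, |(G z).toReal - c| ≤ ε := by
    intro z
    have := herg (fun y => (h y).toReal) hhm.ennreal_toReal 1 hftoReal n hn z
    rw [mul_one] at this
    rw [hGtoReal z]
    exact this
  -- integral bounds over a set S
  have hup : ∀ S : Set (ℕ → E), (∫⁻ ω in S, G (ω m) ∂μ) ≤ ENNReal.ofReal (c + ε) * μ S := by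
    intro S
    calc ∫⁻ ω in S, G (ω m) ∂μ ≤ ∫⁻ _ in S, ENNReal.ofReal (c + ε) ∂μ := by
          refine lintegral_mono fun ω => ?_
          have h1 : (G (ω m)).toReal ≤ c + ε := by
            have := abs_le.mp (hGc (ω m))
            linarith [this.2]
          calc G (ω m) = ENNReal.ofReal (G (ω m)).toReal :=
                (ENNReal.ofReal_toReal (hGfin _)).symm
            _ ≤ ENNReal.ofReal (c + ε) := ENNReal.ofReal_le_ofReal h1
      _ = ENNReal.ofReal (c + ε) * μ S := setLIntegral_const S _
  have hlo : ∀ S : Set (ℕ → E), ENNReal.ofReal (c - ε) * μ S ≤ ∫⁻ ω in S, G (ω m) ∂μ := by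
    intro S
    calc ENNReal.ofReal (c - ε) * μ S = ∫⁻ _ in S, ENNReal.ofReal (c - ε) ∂μ :=
          (setLIntegral_const S _).symm
      _ ≤ ∫⁻ ω in S, G (ω m) ∂μ := by
          refine lintegral_mono fun ω => ?_
          have h1 : c - ε ≤ (G (ω m)).toReal := by
            have := abs_le.mp (hGc (ω m))
            linarith [this.1]
          calc ENNReal.ofReal (c - ε) ≤ ENNReal.ofReal (G (ω m)).toReal :=
                ENNReal.ofReal_le_ofReal h1
            _ = G (ω m) := ENNReal.ofReal_toReal (hGfin _)
  have hμΓt : 0 < (μ Γ).toReal :=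
    ENNReal.toReal_pos hΓ0 (measure_ne_top μ Γ)
  -- upper for Γ∩Δ
  have hupΓ : (μ (Γ ∩ Δ)).toReal ≤ (c + ε) * (μ Γ).toReal := by
    have h1 : μ (Γ ∩ Δ) ≤ ENNReal.ofReal (c + ε) * μ Γ := by rw [e1]; exact hup Γ
    have h2 := ENNReal.toReal_mono
      (ENNReal.mul_ne_top ENNReal.ofReal_ne_top (measure_ne_top μ Γ)) h1
    rwa [ENNReal.toReal_mul, ENNReal.toReal_ofReal (by linarith)] at h2
  have hloΓ : (c - ε) * (μ Γ).toReal ≤ (μ (Γ ∩ Δ)).toReal := by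
    by_cases hce : c - ε ≤ 0
    · exact (mul_nonpos_of_nonpos_of_nonneg hce hμΓt.le).trans ENNReal.toReal_nonneg
    · push_neg at hce
      have h1 : ENNReal.ofReal (c - ε) * μ Γ ≤ μ (Γ ∩ Δ) := by rw [e1]; exact hlo Γ
      have h2 := ENNReal.toReal_mono (measure_ne_top μ _) h1
      rwa [ENNReal.toReal_mul, ENNReal.toReal_ofReal hce.le] at h2
  have hupΔ : (μ Δ).toReal ≤ c + ε := by
    have h1 : μ Δ ≤ ENNReal.ofReal (c + ε) := by
      rw [e2]
      have := hup Set.univ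
      rwa [measure_univ, mul_one] at this
    have h2 := ENNReal.toReal_mono ENNReal.ofReal_ne_top h1
    rwa [ENNReal.toReal_ofReal (by linarith)] at h2
  have hloΔ : c - ε ≤ (μ Δ).toReal := by
    by_cases hce : c - ε ≤ 0
    · exact hce.trans ENNReal.toReal_nonneg
    · push_neg at hce
      have h1 : ENNReal.ofReal (c - ε) ≤ μ Δ := by
        rw [e2]
        have := hlo Set.univ
        rwa [measure_univ, mul_one] at this
      have h2 := ENNReal.toReal_mono (measure_ne_top μ _) h1
      rwa [ENNReal.toReal_ofReal hce.le] at h2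
  -- ratio bounds
  have hratio_up : (μ (Γ ∩ Δ)).toReal / (μ Γ).toReal ≤ c + ε := by
    rw [div_le_iff₀ hμΓt]
    exact hupΓ
  have hratio_lo : c - ε ≤ (μ (Γ ∩ Δ)).toReal / (μ Γ).toReal := by
    rw [le_div_iff₀ hμΓt]
    exact hloΓ
  have habs1 : |(μ (Γ ∩ Δ)).toReal / (μ Γ).toReal - c| ≤ ε :=
    abs_le.mpr ⟨by linarith, by linarith⟩
  have habs2 : |c - (μ Δ).toReal| ≤ ε :=
    abs_le.mpr ⟨by linarith, by linarith⟩
  calc |(μ (Γ ∩ Δ)).toReal / (μ Γ).toReal - (μ Δ).toReal|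
      ≤ |(μ (Γ ∩ Δ)).toReal / (μ Γ).toReal - c| + |c - (μ Δ).toReal| :=
        abs_sub_le _ _ _
    _ ≤ ε + ε := add_le_add habs1 habs2
    _ = 2 * R * Real.exp (-ρ * n) := by rw [hε]; ring
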